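/- The scale-function integral toward +∞ in Feller's test for explosion diverges: ∫_ℓ^∞ exp( −2 Φ(r) ) dr = ∞, where Φ(r) := ∫_ℓ^r (y^α − μ y − h(y)) / (σ² y²) dy for r ≥ ℓ. -/

import Mathlib

open Set Filter Topology MeasureTheory

/-- Feller's test toward `+∞`: the scale-function integral
`∫_ℓ^∞ exp(−2Φ(r)) dr` diverges, where
`Φ(r) = ∫_ℓ^r (y^α − μy − h(y))/(σ²y²) dy`. -/
theorem feller_test_integral_at_infinity_diverges
    (α μ σ ℓ : ℝ) (hα0 : 0 < α) (hα1 : α < 1) (hμ : 0 < μ) (hσ : 0 < σ) (hℓ : 0 < ℓ)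
    (h : ℝ → ℝ) (hcont : ContinuousOn h (Ioi 0)) (hnonneg : ∀ y > (0 : ℝ), 0 ≤ h y)
    (Φ : ℝ → ℝ)
    (hΦ : ∀ r ≥ ℓ, Φ r = ∫ y in ℓ..r, (y ^ α - μ * y - h y) / (σ ^ 2 * y ^ 2)) :
    ∫⁻ r in Ioi ℓ, ENNReal.ofReal (Real.exp (-2 * Φ r)) = ⊤ := by
  have hσ2 : (0:ℝ) < σ ^ 2 := by positivity
  set C : ℝ := ℓ ^ (α - 1) / ((1 - α) * σ ^ 2) with hC
  -- bound Φ r ≤ C for all r ≥ ℓ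
  have hbound : ∀ r ≥ ℓ, Φ r ≤ C := by
    intro r hr
    rw [hΦ r hr]
    have hsub : Icc ℓ r ⊆ Ioi (0:ℝ) := fun y hy => lt_of_lt_of_le hℓ hy.1
    have hposy : ∀ y ∈ Icc ℓ r, (0:ℝ) < y := fun y hy => lt_of_lt_of_le hℓ hy.1
    -- continuity of the integrand on Icc ℓ r
    have hfcont : ContinuousOn (fun y => (y ^ α - μ * y - h y) / (σ ^ 2 * y ^ 2)) (Icc ℓ r) := by
      apply ContinuousOn.div
      · apply ContinuousOn.sub
        apply ContinuousOn.sub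
        · intro y hy
          exact (Real.continuousAt_rpow_const y α (Or.inl (ne_of_gt (hposy y hy)))).continuousWithinAt
        · exact (continuous_const.mul continuous_id).continuousOn
        · exact hcont.mono hsub
      · exact (continuous_const.mul (continuous_pow 2)).continuousOn
      · intro y hy
        have := hposy y hy
        positivity
    have hgcont : ContinuousOn (fun y : ℝ => y ^ (α - 2) / σ ^ 2) (Icc ℓ r) := by
      apply ContinuousOn.div
      · intro y hy
        exact (Real.continuousAt_rpow_const y (α - 2) (Or.inl (ne_of_gt (hposy y hy)))).continuousWithinAt
      · exact continuousOn_const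
      · intro y hy; exact ne_of_gt hσ2
    have hfint : IntervalIntegrable (fun y => (y ^ α - μ * y - h y) / (σ ^ 2 * y ^ 2))
        volume ℓ r := by
      apply ContinuousOn.intervalIntegrable
      rwa [uIcc_of_le hr]
    have hgint : IntervalIntegrable (fun y : ℝ => y ^ (α - 2) / σ ^ 2) volume ℓ r := by
      apply ContinuousOn.intervalIntegrable
      rwa [uIcc_of_le hr]
    have hmono : ∫ y in ℓ..r, (y ^ α - μ * y - h y) / (σ ^ 2 * y ^ 2)
        ≤ ∫ y in ℓ..r, y ^ (α - 2) / σ ^ 2 := by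
      apply intervalIntegral.integral_mono_on hr hfint hgint
      intro y hy
      have hy0 : (0:ℝ) < y := hposy y hy
      have hnum : y ^ α - μ * y - h y ≤ y ^ α := by
        have := hnonneg y hy0
        nlinarith [hμ.le, hy0.le]
      have hden : (0:ℝ) < σ ^ 2 * y ^ 2 := by positivity
      have h1 : (y ^ α - μ * y - h y) / (σ ^ 2 * y ^ 2) ≤ y ^ α / (σ ^ 2 * y ^ 2) := by
        gcongr
      have h2 : y ^ α / (σ ^ 2 * y ^ 2) = y ^ (α - 2) / σ ^ 2 := by
        rw [Real.rpow_sub hy0, Real.rpow_two]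
        field_simp
      rw [← h2]; exact h1
    have hval : ∫ y in ℓ..r, y ^ (α - 2) / σ ^ 2
        = ((r ^ (α - 1) - ℓ ^ (α - 1)) / (α - 1)) / σ ^ 2 := by
      have he : α - 2 + 1 = α - 1 := by ring
      rw [intervalIntegral.integral_div, integral_rpow, he]
      · right
        constructor
        · intro hcontra; linarith
        · rw [uIcc_of_le hr]
          intro hmem
          exact absurd hmem.1 (by linarith)
    have hfin : ((r ^ (α - 1) - ℓ ^ (α - 1)) / (α - 1)) / σ ^ 2 ≤ C := by
      rw [hC]
      have hr1 : (0:ℝ) ≤ r ^ (α - 1) := Real.rpow_nonneg (le_of_lt (lt_of_lt_of_le hℓ hr)) _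
      have key : (r ^ (α - 1) - ℓ ^ (α - 1)) / (α - 1) = (ℓ ^ (α - 1) - r ^ (α - 1)) / (1 - α) := by
        rw [div_eq_div_iff (by linarith) (by linarith)]; ring
      rw [key, div_div]
      have hden2 : (0:ℝ) < (1 - α) * σ ^ 2 := by nlinarith
      gcongr
      linarith
    linarith [hmono, hval ▸ hfin]
  -- now the lintegral bound
  have hle : ∀ r ∈ Ioi ℓ, ENNReal.ofReal (Real.exp (-2 * C))
      ≤ ENNReal.ofReal (Real.exp (-2 * Φ r)) := by
    intro r hr
    apply ENNReal.ofReal_le_ofReal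
    apply Real.exp_le_exp.2
    have := hbound r (le_of_lt hr)
    linarith
  have hbig : ∫⁻ r in Ioi ℓ, ENNReal.ofReal (Real.exp (-2 * C))
      ≤ ∫⁻ r in Ioi ℓ, ENNReal.ofReal (Real.exp (-2 * Φ r)) :=
    setLIntegral_mono' measurableSet_Ioi hle
  have hconst : ∫⁻ r in Ioi ℓ, ENNReal.ofReal (Real.exp (-2 * C)) = ⊤ := by
    rw [setLIntegral_const, Real.volume_Ioi]
    rw [ENNReal.mul_top]
    exact (ENNReal.ofReal_pos.mpr (Real.exp_pos _)).ne'
  rw [hconst] at hbig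
  exact top_le_iff.mp hbig
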